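/- Let k ≥ 2 be an integer. Any k-CNF boolean formula in which no variable appears (positively or negatively) in more than 2^{k-2}/k clauses is satisfiable. -/

import Mathlib

open Finset

namespace KCNFAux

variable {V : Type*} [DecidableEq V]

/-- variables of a clause -/
def vrs (c : Finset (V × Bool)) : Finset V := c.image Prod.fst

/-- clause `c` is satisfied by the assignment "true iff in `T`" -/
def clsat (T : Finset V) (c : Finset (V × Bool)) : Prop :=
  ∃ l ∈ c, (decide (l.1 ∈ T) = l.2)

instance (T : Finset V) (c : Finset (V × Bool)) : Decidable (clsat T c) := by
  unfold clsat; infer_instance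

/-- number of assignments of variables in `W` satisfying all clauses of `S` -/
def g (W : Finset V) (S : Finset (Finset (V × Bool))) : ℕ :=
  (W.powerset.filter (fun T => ∀ c ∈ S, clsat T c)).card

lemma g_empty (W : Finset V) : g W ∅ = 2 ^ W.card := by
  simp [g, Finset.card_powerset]

lemma card_vrs {c : Finset (V × Bool)}
    (hd : ∀ l₁ ∈ c, ∀ l₂ ∈ c, l₁.1 = l₂.1 → l₁ = l₂) :
    (vrs c).card = c.card :=
  Finset.card_image_of_injOn hd

lemma mem_of_violates {T : Finset V} {c : Finset (V × Bool)} (hv : ¬ clsat T c)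
    {v : V} (hvc : v ∈ vrs c) : (v ∈ T ↔ (v, false) ∈ c) := by
  simp only [clsat, not_exists, not_and] at hv
  constructor
  · intro hvT
    obtain ⟨⟨v', b⟩, hmem, hfst⟩ := Finset.mem_image.1 hvc
    cases hfst
    have := hv _ hmem
    cases b with
    | false => exact hmem
    | true => simp [hvT] at this
  · intro hmem
    have := hv _ hmem
    by_contra hvT
    simp [hvT] at this

lemma g_mono (W : Finset V) {S S' : Finset (Finset (V × Bool))} (h : S ⊆ S') :
    g W S' ≤ g W S := by
  apply Finset.card_le_card
  intro T hT
  simp only [Finset.mem_filter] at hT ⊢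
  exact ⟨hT.1, fun c hc => hT.2 c (h hc)⟩

/-- Key counting step: assignments satisfying `S'` (clauses disjoint from `c`) while
violating `c` are a `2^{-|vrs c|}` fraction of those satisfying `S'`. -/
lemma bad_count (W : Finset V) (c : Finset (V × Bool)) (S' : Finset (Finset (V × Bool)))
    (hcW : vrs c ⊆ W)
    (hdis : ∀ c' ∈ S', Disjoint (vrs c') (vrs c)) :
    (W.powerset.filter (fun T => (∀ c' ∈ S', clsat T c') ∧ ¬ clsat T c)).card
      * 2 ^ (vrs c).card ≤ g W S' := by
  classical
  set B := W.powerset.filter (fun T => (∀ c' ∈ S', clsat T c') ∧ ¬ clsat T c) with hB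
  have hcardp : (B ×ˢ (vrs c).powerset).card = B.card * 2 ^ (vrs c).card := by
    simp [Finset.card_product, Finset.card_powerset]
  rw [← hcardp]
  unfold g
  apply Finset.card_le_card_of_injOn (fun p => p.1 \ vrs c ∪ p.2)
  · rintro ⟨T, U⟩ hp
    simp only [Finset.mem_coe, Finset.mem_product, hB, Finset.mem_filter, Finset.mem_powerset] at hp
    obtain ⟨⟨hTW, hsat, hviol⟩, hU⟩ := hp
    simp only [Finset.mem_coe, Finset.mem_filter, Finset.mem_powerset]
    constructor
    · exact Finset.union_subset ((Finset.sdiff_subset).trans hTW) (hU.trans hcW)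
    · intro c' hc'
      obtain ⟨l, hl, hsatl⟩ := hsat c' hc'
      refine ⟨l, hl, ?_⟩
      have hnot : l.1 ∉ vrs c := by
        intro h
        exact (Finset.disjoint_left.mp (hdis c' hc'))
          (Finset.mem_image_of_mem Prod.fst hl) h
      have hmemiff : (l.1 ∈ T \ vrs c ∪ U) ↔ l.1 ∈ T := by
        simp only [Finset.mem_union, Finset.mem_sdiff]
        constructor
        · rintro (⟨h1, _⟩ | h1)
          · exact h1
          · exact absurd (hU h1) hnot
        · intro h1; exact Or.inl ⟨h1, hnot⟩
      rw [decide_eq_decide.mpr hmemiff]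
      exact hsatl
  · rintro ⟨T, U⟩ hp ⟨T₂, U₂⟩ hp₂ heq
    simp only [Finset.coe_product, Set.mem_prod, Finset.mem_coe, hB,
      Finset.mem_filter, Finset.mem_powerset] at hp hp₂
    obtain ⟨⟨hTW, hsat, hviol⟩, hU⟩ := hp
    obtain ⟨⟨hTW₂, hsat₂, hviol₂⟩, hU₂⟩ := hp₂
    simp only at heq
    have hext : ∀ a, a ∈ T \ vrs c ∪ U ↔ a ∈ T₂ \ vrs c ∪ U₂ :=
      fun a => by rw [heq]
    have hUeq : U = U₂ := by
      ext v
      constructor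
      · intro hv
        have hvc := hU hv
        have := (hext v).mp (Finset.mem_union_right _ hv)
        rcases Finset.mem_union.mp this with h | h
        · exact absurd hvc (Finset.mem_sdiff.mp h).2
        · exact h
      · intro hv
        have hvc := hU₂ hv
        have := (hext v).mpr (Finset.mem_union_right _ hv)
        rcases Finset.mem_union.mp this with h | h
        · exact absurd hvc (Finset.mem_sdiff.mp h).2
        · exact h
    have hTeq : T = T₂ := by
      ext v
      by_cases hvc : v ∈ vrs c
      · rw [mem_of_violates hviol hvc, mem_of_violates hviol₂ hvc]
      · constructor
        · intro hv
          have := (hext v).mp (Finset.mem_union_left _ (Finset.mem_sdiff.mpr ⟨hv, hvc⟩))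
          rcases Finset.mem_union.mp this with h | h
          · exact (Finset.mem_sdiff.mp h).1
          · exact absurd (hU₂ h) hvc
        · intro hv
          have := (hext v).mpr (Finset.mem_union_left _ (Finset.mem_sdiff.mpr ⟨hv, hvc⟩))
          rcases Finset.mem_union.mp this with h | h
          · exact (Finset.mem_sdiff.mp h).1
          · exact absurd (hU h) hvc
    exact Prod.ext hTeq hUeq

/-- The core numeric inequality behind the symmetric LLL in our setting. -/
lemma numeric (k : ℕ) (hk : 4 ≤ k) (D : ℕ) (hD : (D : ℝ) ≤ 2 ^ (k - 2) - k) :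
    (1 : ℝ) / 2 ^ k ≤ (4 / 2 ^ k) * (1 - 4 / 2 ^ k) ^ D := by
  have h2k : (2 : ℝ) ^ k = 4 * 2 ^ (k - 2) := by
    have hk2 : k - 2 + 2 = k := by omega
    conv_lhs => rw [← hk2]
    rw [pow_add]; ring
  have h2kpos : (0 : ℝ) < 2 ^ k := by positivity
  have h16 : (16 : ℝ) ≤ 2 ^ k := by
    calc (16 : ℝ) = 2 ^ 4 := by norm_num
    _ ≤ 2 ^ k := by
      apply pow_le_pow_right₀ (by norm_num) hk
  set x : ℝ := 4 / 2 ^ k with hxdef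
  have hx0 : 0 < x := by positivity
  have hx4 : x ≤ 1 / 4 := by
    rw [hxdef, div_le_div_iff₀ h2kpos (by norm_num)]
    linarith
  have hlog : (4 : ℝ) / 3 ≤ Real.log 4 := by
    have h4 : (4 : ℝ) = 2 ^ 2 := by norm_num
    rw [h4, Real.log_pow]
    have := Real.log_two_gt_d9
    push_cast
    linarith
  set a : ℝ := x * Real.log 4 with hadef
  have ha0 : 0 ≤ a := by
    apply mul_nonneg hx0.le
    linarith
  have hexp : Real.exp (-a) ≤ 1 - x := by
    have h1 := Real.add_one_le_exp a
    have h2 : Real.exp (-a) * Real.exp a = 1 := by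
      rw [← Real.exp_add]; simp
    have h3 := Real.exp_pos a
    have h4 := Real.exp_pos (-a)
    -- (1 - x) * exp a ≥ (1 - x) * (1 + a) ≥ 1 = exp(-a) * exp a
    have key : (1 : ℝ) ≤ (1 - x) * Real.exp a := by
      have h5 : (1 - x) * (1 + a) ≥ 1 := by
        have : a * (1 - x) ≥ x := by
          rw [hadef]
          nlinarith
        nlinarith
      nlinarith
    nlinarith
  have hxd : x * D ≤ 1 := by
    have hD0 : (D : ℝ) ≤ 2 ^ (k - 2) := by
      have : (0 : ℝ) ≤ (k : ℝ) := by positivity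
      linarith
    rw [hxdef]
    rw [div_mul_eq_mul_div, div_le_one h2kpos, h2k]
    linarith
  have hpow : (1 / 4 : ℝ) ≤ (1 - x) ^ D := by
    have e1 : (1 / 4 : ℝ) = Real.exp (-(Real.log 4)) := by
      rw [Real.exp_neg, Real.exp_log (by norm_num : (0:ℝ) < 4)]
      norm_num
    have e2 : Real.exp (-(Real.log 4)) ≤ Real.exp ((D : ℕ) * (-a)) := by
      apply Real.exp_le_exp.mpr
      have : a * D ≤ Real.log 4 := by
        rw [hadef]
        calc x * Real.log 4 * D = (x * D) * Real.log 4 := by ring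
        _ ≤ 1 * Real.log 4 := by
            apply mul_le_mul_of_nonneg_right hxd (by linarith)
        _ = Real.log 4 := one_mul _
      push_cast
      nlinarith
    have e3 : Real.exp ((D : ℕ) * (-a)) = Real.exp (-a) ^ D := Real.exp_nat_mul _ _
    have e4 : Real.exp (-a) ^ D ≤ (1 - x) ^ D :=
      pow_le_pow_left₀ (Real.exp_pos _).le hexp D
    rw [e1]
    calc Real.exp (-(Real.log 4)) ≤ Real.exp ((D : ℕ) * (-a)) := e2
    _ = Real.exp (-a) ^ D := e3
    _ ≤ (1 - x) ^ D := e4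
  calc (1 : ℝ) / 2 ^ k = x * (1 / 4) := by rw [hxdef]; field_simp
  _ ≤ x * (1 - x) ^ D := mul_le_mul_of_nonneg_left hpow hx0.le

/-- Main LLL induction (counting form): removing clauses decreases the count of
satisfying assignments by at most a factor `(1-x)` per clause, `x = 4/2^k`. -/
lemma key {k : ℕ} (hk4 : 4 ≤ k) (C : Finset (Finset (V × Bool)))
    (hcard : ∀ c ∈ C, c.card = k)
    (hdistinct : ∀ c ∈ C, ∀ l₁ ∈ c, ∀ l₂ ∈ c, l₁.1 = l₂.1 → l₁ = l₂)
    (hocc : ∀ v : V, ((C.filter (fun c => ∃ b, (v, b) ∈ c)).card : ℝ) ≤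
      2 ^ (k - 2) / k) :
    ∀ n : ℕ, ∀ S, S ⊆ C → S.card ≤ n → ∀ T, T ⊆ S →
      (1 - 4 / 2 ^ k : ℝ) ^ ((S \ T).card) * (g (C.biUnion vrs) T : ℝ)
        ≤ (g (C.biUnion vrs) S : ℝ) := by
  classical
  set W := C.biUnion vrs with hWdef
  set x : ℝ := 4 / 2 ^ k with hxdef
  have h2kpos : (0 : ℝ) < 2 ^ k := by positivity
  have h16 : (16 : ℝ) ≤ 2 ^ k := by
    calc (16 : ℝ) = 2 ^ 4 := by norm_num
    _ ≤ 2 ^ k := by apply pow_le_pow_right₀ (by norm_num) hk4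
  have hx0 : 0 < x := by positivity
  have hx4 : x ≤ 1 / 4 := by
    rw [hxdef, div_le_div_iff₀ h2kpos (by norm_num)]
    linarith
  have hx1 : 0 ≤ 1 - x := by linarith
  intro n
  induction n with
  | zero =>
    intro S hSC hS0 T hTS
    have hSempty : S = ∅ := Finset.card_eq_zero.mp (Nat.le_zero.mp hS0)
    subst hSempty
    have hTempty : T = ∅ := Finset.subset_empty.mp hTS
    subst hTempty
    simp
  | succ n ih =>
    intro S hSC hScard T hTS
    by_cases hST : S \ T = ∅
    · have : S = T := Finset.Subset.antisymm (Finset.sdiff_eq_empty_iff_subset.mp hST) hTS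
      subst this
      simp
    · obtain ⟨c, hcST⟩ := Finset.nonempty_of_ne_empty hST
      obtain ⟨hcS, hcT⟩ := Finset.mem_sdiff.mp hcST
      have hcC : c ∈ C := hSC hcS
      have hvrsk : (vrs c).card = k := by
        rw [card_vrs (hdistinct c hcC), hcard c hcC]
      have hvrsne : (vrs c).Nonempty := by
        rw [← Finset.card_pos, hvrsk]; omega
      -- the clauses of S sharing no variable with c
      set SΓ := S.filter (fun c' => Disjoint (vrs c') (vrs c)) with hSΓdef
      have hcnotSΓ : c ∉ SΓ := by
        intro h
        have hdis := (Finset.mem_filter.mp h).2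
        obtain ⟨v, hv⟩ := hvrsne
        exact Finset.disjoint_left.mp hdis hv hv
      have hSΓsub : SΓ ⊆ S.erase c :=
        (Finset.subset_erase).mpr ⟨Finset.filter_subset _ _, hcnotSΓ⟩
      set bad := (W.powerset.filter
        (fun T' => (∀ c' ∈ SΓ, clsat T' c') ∧ ¬ clsat T' c)).card with hbaddef
      -- split lemma
      have hsplit : g W (S.erase c) ≤ g W S + bad := by
        have hsub : W.powerset.filter (fun T' => ∀ c'' ∈ S.erase c, clsat T' c'')
            ⊆ (W.powerset.filter (fun T' => ∀ c'' ∈ S, clsat T' c''))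
              ∪ (W.powerset.filter
                (fun T' => (∀ c' ∈ SΓ, clsat T' c') ∧ ¬ clsat T' c)) := by
          intro T' hT'
          obtain ⟨hT'W, hall⟩ := Finset.mem_filter.mp hT'
          by_cases hc : clsat T' c
          · apply Finset.mem_union_left
            refine Finset.mem_filter.mpr ⟨hT'W, fun c'' hc'' => ?_⟩
            by_cases he : c'' = c
            · subst he; exact hc
            · exact hall c'' (Finset.mem_erase.mpr ⟨he, hc''⟩)
          · apply Finset.mem_union_right
            exact Finset.mem_filter.mpr
              ⟨hT'W, fun c' hc' => hall c' (hSΓsub hc'), hc⟩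
        calc g W (S.erase c) ≤ _ := Finset.card_le_card hsub
        _ ≤ g W S + bad := Finset.card_union_le _ _
      -- bad count
      have hcW : vrs c ⊆ W := Finset.subset_biUnion_of_mem vrs hcC
      have hbc : bad * 2 ^ k ≤ g W SΓ := by
        have := bad_count W c SΓ hcW
          (fun c' hc' => (Finset.mem_filter.mp hc').2)
        rwa [hvrsk] at this
      -- chain via ih
      set D := ((S.erase c) \ SΓ).card with hDdef
      have hScard1 : 1 ≤ S.card := Finset.card_pos.mpr ⟨c, hcS⟩
      have herasecard : (S.erase c).card ≤ n := by
        rw [Finset.card_erase_of_mem hcS]; omega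
      have heraseC : S.erase c ⊆ C := (Finset.erase_subset _ _).trans hSC
      have hchain := ih (S.erase c) heraseC herasecard SΓ hSΓsub
      -- D bound
      have hDR : (D : ℝ) ≤ 2 ^ (k - 2) - k := by
        have hDsub : (S.erase c) \ SΓ ⊆ (vrs c).biUnion
            (fun v => (C.filter (fun c' => ∃ b, (v, b) ∈ c')).erase c) := by
          intro c' hc'
          obtain ⟨hc'e, hc'n⟩ := Finset.mem_sdiff.mp hc'
          obtain ⟨hc'ne, hc'S⟩ := Finset.mem_erase.mp hc'e
          have hndis : ¬ Disjoint (vrs c') (vrs c) := by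
            intro hdis
            exact hc'n (Finset.mem_filter.mpr ⟨hc'S, hdis⟩)
          obtain ⟨v, hv1, hv2⟩ := Finset.not_disjoint_iff.mp hndis
          apply Finset.mem_biUnion.mpr
          refine ⟨v, hv2, Finset.mem_erase.mpr ⟨hc'ne, ?_⟩⟩
          obtain ⟨⟨v', b⟩, hmem, hfst⟩ := Finset.mem_image.mp hv1
          cases hfst
          exact Finset.mem_filter.mpr ⟨hSC hc'S, b, hmem⟩
        have h1 : D ≤ ∑ v ∈ vrs c,
            ((C.filter (fun c' => ∃ b, (v, b) ∈ c')).erase c).card :=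
          le_trans (Finset.card_le_card hDsub) (Finset.card_biUnion_le)
        have h2 : ((∑ v ∈ vrs c,
            ((C.filter (fun c' => ∃ b, (v, b) ∈ c')).erase c).card : ℕ) : ℝ)
            ≤ ∑ v ∈ vrs c, (2 ^ (k - 2) / k - 1 : ℝ) := by
          push_cast
          apply Finset.sum_le_sum
          intro v hv
          have hcmem : c ∈ C.filter (fun c' => ∃ b, (v, b) ∈ c') := by
            obtain ⟨⟨v', b⟩, hmem, hfst⟩ := Finset.mem_image.mp hv
            cases hfst
            exact Finset.mem_filter.mpr ⟨hcC, b, hmem⟩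
          have hge1 : 1 ≤ (C.filter (fun c' => ∃ b, (v, b) ∈ c')).card :=
            Finset.card_pos.mpr ⟨c, hcmem⟩
          rw [Finset.card_erase_of_mem hcmem]
          rw [Nat.cast_sub hge1]
          have := hocc v
          push_cast
          linarith
        have h3 : ∑ v ∈ vrs c, (2 ^ (k - 2) / k - 1 : ℝ)
            = 2 ^ (k - 2) - k := by
          rw [Finset.sum_const, hvrsk, nsmul_eq_mul]
          have hkne : (k : ℝ) ≠ 0 := by positivity
          field_simp
        calc (D : ℝ) ≤ _ := by exact_mod_cast h1
        _ ≤ _ := h2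
        _ = _ := h3
      have hnum := numeric k hk4 D hDR
      -- combine: (1 - x) * g (S.erase c) ≤ g S
      have hgΓ0 : (0 : ℝ) ≤ (g W SΓ : ℝ) := by positivity
      have hstep : (1 - x) * (g W (S.erase c) : ℝ) ≤ (g W S : ℝ) := by
        have hsplitR : (g W (S.erase c) : ℝ) ≤ (g W S : ℝ) + bad := by
          exact_mod_cast hsplit
        have hbcR : (bad : ℝ) * 2 ^ k ≤ (g W SΓ : ℝ) := by exact_mod_cast hbc
        have hb : (bad : ℝ) ≤ x * (g W (S.erase c) : ℝ) := by
          have e1 : (bad : ℝ) ≤ (g W SΓ : ℝ) * (1 / 2 ^ k) := by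
            rw [mul_one_div, le_div_iff₀ h2kpos]
            linarith
          have e2 : (g W SΓ : ℝ) * (1 / 2 ^ k)
              ≤ (g W SΓ : ℝ) * (x * (1 - x) ^ D) :=
            mul_le_mul_of_nonneg_left hnum hgΓ0
          have e3 : (g W SΓ : ℝ) * (x * (1 - x) ^ D)
              = x * ((1 - x) ^ D * (g W SΓ : ℝ)) := by ring
          have e4 : x * ((1 - x) ^ D * (g W SΓ : ℝ))
              ≤ x * (g W (S.erase c) : ℝ) :=
            mul_le_mul_of_nonneg_left hchain hx0.le
          linarith
        linarith
      -- final assembly for this step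
      have hTsub : T ⊆ S.erase c := (Finset.subset_erase).mpr ⟨hTS, hcT⟩
      have hih := ih (S.erase c) heraseC herasecard T hTsub
      have hcardeq : (S \ T).card = ((S.erase c) \ T).card + 1 := by
        have he : (S.erase c) \ T = (S \ T).erase c := by
          rw [Finset.erase_sdiff_comm]
        rw [he, Finset.card_erase_of_mem hcST]
        have : 1 ≤ (S \ T).card := Finset.card_pos.mpr ⟨c, hcST⟩
        omega
      rw [hcardeq, pow_succ]
      calc (1 - x) ^ ((S.erase c) \ T).card * (1 - x) * (g W T : ℝ)
          = (1 - x) * ((1 - x) ^ ((S.erase c) \ T).card * (g W T : ℝ)) := by ring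
      _ ≤ (1 - x) * (g W (S.erase c) : ℝ) := mul_le_mul_of_nonneg_left hih hx1
      _ ≤ (g W S : ℝ) := hstep

end KCNFAux

/-- Lovász Local Lemma satisfiability criterion: any `k`-CNF formula (`k ≥ 2`), in which
no variable appears (positively or negatively) in more than `2^{k-2}/k` clauses, is
satisfiable. Clauses are finite sets of literals (variable, sign) over variables `V`,
each clause containing exactly `k` literals on `k` distinct variables. -/
theorem kCNF_low_occurrence_satisfiable
    (V : Type*) [DecidableEq V] (k : ℕ) (hk : 2 ≤ k)
    (C : Finset (Finset (V × Bool)))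
    (hcard : ∀ c ∈ C, c.card = k)
    (hdistinct : ∀ c ∈ C, ∀ l₁ ∈ c, ∀ l₂ ∈ c, l₁.1 = l₂.1 → l₁ = l₂)
    (hocc : ∀ v : V, ((C.filter (fun c => ∃ b, (v, b) ∈ c)).card : ℝ) ≤
      2 ^ (k - 2) / k) :
    ∃ σ : V → Bool, ∀ c ∈ C, ∃ l ∈ c, σ l.1 = l.2 := by
  classical
  by_cases hk4 : k < 4
  · -- small k: the hypothesis forces C = ∅
    have hC : C = ∅ := by
      rcases Finset.eq_empty_or_nonempty C with h | ⟨c, hc⟩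
      · exact h
      · exfalso
        have hcpos : 0 < c.card := by rw [hcard c hc]; omega
        obtain ⟨l, hl⟩ := Finset.card_pos.mp hcpos
        have h1 : c ∈ C.filter (fun c' => ∃ b, (l.1, b) ∈ c') :=
          Finset.mem_filter.mpr ⟨hc, l.2, by simpa using hl⟩
        have h2 := hocc l.1
        have h3 : (1 : ℝ) ≤ ((C.filter (fun c' => ∃ b, (l.1, b) ∈ c')).card : ℝ) := by
          exact_mod_cast Finset.card_pos.mpr ⟨c, h1⟩
        have h4 : (1 : ℝ) ≤ 2 ^ (k - 2) / (k : ℝ) := le_trans h3 h2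
        interval_cases k <;> norm_num at h4
    exact ⟨fun _ => true, by simp [hC]⟩
  · push_neg at hk4
    have hkey := KCNFAux.key hk4 C hcard hdistinct hocc C.card C
      (Finset.Subset.refl C) le_rfl ∅ (Finset.empty_subset C)
    rw [Finset.sdiff_empty, KCNFAux.g_empty] at hkey
    have h2kpos : (0 : ℝ) < 2 ^ k := by positivity
    have h16 : (16 : ℝ) ≤ 2 ^ k := by
      calc (16 : ℝ) = 2 ^ 4 := by norm_num
      _ ≤ 2 ^ k := by apply pow_le_pow_right₀ (by norm_num) hk4
    have hx : (0 : ℝ) < 1 - 4 / 2 ^ k := by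
      rw [sub_pos, div_lt_iff₀ h2kpos]
      linarith
    have hpos : (0 : ℝ) < (KCNFAux.g (C.biUnion KCNFAux.vrs) C : ℝ) := by
      refine lt_of_lt_of_le ?_ hkey
      have := pow_pos hx C.card
      positivity
    have hposn : 0 < KCNFAux.g (C.biUnion KCNFAux.vrs) C := by exact_mod_cast hpos
    simp only [KCNFAux.g] at hposn
    obtain ⟨T, hT⟩ := Finset.card_pos.mp hposn
    obtain ⟨hTW, hsat⟩ := Finset.mem_filter.mp hT
    refine ⟨fun v => decide (v ∈ T), fun c hc => ?_⟩
    obtain ⟨l, hl, he⟩ := hsat c hc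
    exact ⟨l, hl, he⟩
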